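/- For the single seed-bank block counting chain with two individuals, the expected time to the most recent common ancestor started from two dormant blocks equals 1 + (4c+3)/(2λ) + (2c² + c)/(2λ²). Concretely, the unique solution (x, y, z) of the linear system x = 1/(2λ) + y, y = 1/(c+λ) + (c/(c+λ))·x + (λ/(c+λ))·z, z = 1/(1+2c) + (2c/(1+2c))·y satisfies x = 1 + (4c+3)/(2λ) + (2c²+c)/(2λ²). -/

import Mathlib

/-- For the single seed-bank block counting chain with two individuals,
the solution of the linear system for the expected times to the MRCA
satisfies `E[T_MRCA(0,2δ_λ)] = 1 + (4c+3)/(2λ) + (2c²+c)/(2λ²)`. -/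
theorem stmt_6 (c lam x y z : ℝ) (hc : 0 < c) (hlam : 0 < lam)
    (hx : x = 1 / (2 * lam) + y)
    (hy : y = 1 / (c + lam) + (c / (c + lam)) * x + (lam / (c + lam)) * z)
    (hz : z = 1 / (1 + 2 * c) + (2 * c / (1 + 2 * c)) * y) :
    x = 1 + (4 * c + 3) / (2 * lam) + (2 * c ^ 2 + c) / (2 * lam ^ 2) := by
  have h1 : c + lam ≠ 0 := by positivity
  have h2 : (1 : ℝ) + 2 * c ≠ 0 := by positivity
  have h3 : lam ≠ 0 := hlam.ne'
  field_simp at hx hy hz ⊢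
  linear_combination (2*c^2+c+lam)*hx + (2*lam*(1+2*c))*hy + (2*lam^2)*hz
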